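/- Let n ≥ 6s, ν ≥ 2, and let {U_i = U[z_i,λ_i]}_{i=1}^ν be a δ-interacting family of bubbles. There exists a constant C > 0 depending only on n, s, ν such that, provided δ > 0 is small enough, ‖σ^p − Σ_{i=1}^ν U_i^p‖_{**} ≤ C, where σ = Σ_{i=1}^ν U_i. -/

import Mathlib

open MeasureTheory Real Filter
open scoped FourierTransform ENNReal Topology

noncomputable section

abbrev Euc (n : ℕ) := EuclideanSpace ℝ (Fin n)

/-- Fourier transform of a real-valued function on `ℝⁿ`. -/
def ft (n : ℕ) (u : Euc n → ℝ) : Euc n → ℂ :=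
  𝓕 (fun x => (u x : ℂ))

/-- Square of the homogeneous Sobolev norm `‖u‖_{Ḣ^s}²`. -/
def hsNormSq (n : ℕ) (s : ℝ) (u : Euc n → ℝ) : ℝ :=
  ∫ ξ : Euc n, ‖ξ‖ ^ (2*s) * ‖ft n u ξ‖ ^ 2

/-- The homogeneous Sobolev norm `‖u‖_{Ḣ^s}`. -/
def hsNorm (n : ℕ) (s : ℝ) (u : Euc n → ℝ) : ℝ :=
  Real.sqrt (hsNormSq n s u)

/-- Membership in the homogeneous Sobolev space `Ḣ^s(ℝⁿ)`. -/
def memHs (n : ℕ) (s : ℝ) (u : Euc n → ℝ) : Prop :=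
  Integrable (fun ξ : Euc n => ‖ξ‖ ^ (2*s) * ‖ft n u ξ‖ ^ 2)

/-- The `Ḣ^s` inner product. -/
def hsInner (n : ℕ) (s : ℝ) (f g : Euc n → ℝ) : ℂ :=
  ∫ ξ : Euc n, ((‖ξ‖ ^ (2*s) : ℝ) : ℂ) * (ft n f ξ * (starRingEnd ℂ) (ft n g ξ))

/-- `fracEq n s f g` encodes the equation `(-Δ)^s f = g` via the Fourier transform
`𝓕((-Δ)^s f)(ξ) = ‖ξ‖^{2s} 𝓕f(ξ)`. -/
def fracEq (n : ℕ) (s : ℝ) (f g : Euc n → ℝ) : Prop :=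
  ∀ ξ : Euc n, ((‖ξ‖ ^ (2*s) : ℝ) : ℂ) * ft n f ξ = ft n g ξ

/-- The critical exponent `p = (n+2s)/(n-2s)`. -/
def pexp (n : ℕ) (s : ℝ) : ℝ := ((n:ℝ) + 2*s) / ((n:ℝ) - 2*s)

/-- The normalizing constant `α_{n,s}`. -/
def bubbleConst (n : ℕ) (s : ℝ) : ℝ :=
  2 ^ (((n:ℝ) - 2*s)/2) *
    (Real.Gamma (((n:ℝ) + 2*s)/2) / Real.Gamma (((n:ℝ) - 2*s)/2)) ^ (((n:ℝ) - 2*s)/(4*s))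

/-- The bubble `U[z,λ]`. -/
def bubble (n : ℕ) (s : ℝ) (z : Euc n) (lam : ℝ) (x : Euc n) : ℝ :=
  bubbleConst n s * (lam / (1 + lam ^ 2 * ‖x - z‖ ^ 2)) ^ (((n:ℝ) - 2*s)/2)

/-- The functions `Z^a[z,λ]`, `a = 1,…,n+1`:
for `a ≤ n`, `Z^a = λ⁻¹ ∂U[z,λ]/∂z_a`, and `Z^{n+1} = λ ∂U[z,λ]/∂λ`. -/
def bubbleZ (n : ℕ) (s : ℝ) (z : Euc n) (lam : ℝ) (a : Fin (n+1)) (x : Euc n) : ℝ :=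
  if h : (a : ℕ) < n then
    lam⁻¹ *
      deriv (fun t : ℝ => bubble n s (z + t • EuclideanSpace.single (⟨(a : ℕ), h⟩ : Fin n) 1) lam x) 0
  else
    lam * deriv (fun t : ℝ => bubble n s z t x) lam

/-- The interaction quantity `q_{ij}`. -/
def interq (n : ℕ) (s : ℝ) (z₁ z₂ : Euc n) (l₁ l₂ : ℝ) : ℝ :=
  (l₁/l₂ + l₂/l₁ + l₁*l₂*‖z₁ - z₂‖ ^ 2) ^ (-(((n:ℝ) - 2*s)/2))

/-- A ν-tuple of bubbles is δ-interacting. -/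
def deltaInteracting (n : ℕ) (s : ℝ) (ν : ℕ) (z : Fin ν → Euc n) (lam : Fin ν → ℝ) (δ : ℝ) : Prop :=
  ∀ i j : Fin ν, i ≠ j → interq n s (z i) (z j) (lam i) (lam j) ≤ δ

/-- `𝒬 = max_{i≠j} q_{ij}`. -/
def scrQ (n : ℕ) (s : ℝ) (ν : ℕ) (z : Fin ν → Euc n) (lam : Fin ν → ℝ) : ℝ :=
  sSup {q : ℝ | ∃ i j : Fin ν, i ≠ j ∧ q = interq n s (z i) (z j) (lam i) (lam j)}

/-- `ℛ_{ij} = max{√(λ_i/λ_j), √(λ_j/λ_i), √(λ_iλ_j)|z_i−z_j|}`. -/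
def interR {n : ℕ} (z₁ z₂ : Euc n) (l₁ l₂ : ℝ) : ℝ :=
  max (max (Real.sqrt (l₁/l₂)) (Real.sqrt (l₂/l₁))) (Real.sqrt (l₁*l₂) * ‖z₁ - z₂‖)

/-- `ℛ = (1/2) min_{i≠j} ℛ_{ij}`. -/
def scrR (n : ℕ) (ν : ℕ) (z : Fin ν → Euc n) (lam : Fin ν → ℝ) : ℝ :=
  (1/2) * sInf {r : ℝ | ∃ i j : Fin ν, i ≠ j ∧ r = interR (z i) (z j) (lam i) (lam j)}

/-- Japanese bracket, as a function of `|y|`. -/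
def jb (t : ℝ) : ℝ := Real.sqrt (1 + t ^ 2)

/-- The weight `v_i^{in}` (both the `n > 6s` and the `n = 6s` versions). -/
def vin (n : ℕ) (s R : ℝ) (z : Euc n) (lam : ℝ) (x : Euc n) : ℝ :=
  if (n:ℝ) = 6*s then
    (if lam * ‖x - z‖ < R ^ 2 then
      lam ^ (4*s) * R ^ (-(4*s)) * jb (lam * ‖x - z‖) ^ (-(4*s)) else 0)
  else
    (if lam * ‖x - z‖ < R then
      lam ^ (((n:ℝ) + 2*s)/2) * R ^ (2*s - (n:ℝ)) * jb (lam * ‖x - z‖) ^ (-(4*s)) else 0)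

/-- The weight `v_i^{out}`. -/
def vout (n : ℕ) (s R : ℝ) (z : Euc n) (lam : ℝ) (x : Euc n) : ℝ :=
  if (n:ℝ) = 6*s then
    (if R ^ 2 ≤ lam * ‖x - z‖ then
      lam ^ (4*s) * R ^ (-(2*s)) * (lam * ‖x - z‖) ^ (-(5*s)) else 0)
  else
    (if R ≤ lam * ‖x - z‖ then
      lam ^ (((n:ℝ) + 2*s)/2) * R ^ (-(4*s)) * (lam * ‖x - z‖) ^ (2*s - (n:ℝ)) else 0)

/-- The weight `w_i^{in}`. -/
def win (n : ℕ) (s R : ℝ) (z : Euc n) (lam : ℝ) (x : Euc n) : ℝ :=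
  if (n:ℝ) = 6*s then
    (if lam * ‖x - z‖ < R ^ 2 then
      lam ^ (2*s) * R ^ (-(4*s)) * jb (lam * ‖x - z‖) ^ (-(2*s)) else 0)
  else
    (if lam * ‖x - z‖ < R then
      lam ^ (((n:ℝ) - 2*s)/2) * R ^ (2*s - (n:ℝ)) * jb (lam * ‖x - z‖) ^ (-(2*s)) else 0)

/-- The weight `w_i^{out}`. -/
def wout (n : ℕ) (s R : ℝ) (z : Euc n) (lam : ℝ) (x : Euc n) : ℝ :=
  if (n:ℝ) = 6*s then
    (if R ^ 2 ≤ lam * ‖x - z‖ then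
      lam ^ (2*s) * R ^ (-(2*s)) * (lam * ‖x - z‖) ^ (-(3*s)) else 0)
  else
    (if R ≤ lam * ‖x - z‖ then
      lam ^ (((n:ℝ) - 2*s)/2) * R ^ (-(4*s)) * (lam * ‖x - z‖) ^ (4*s - (n:ℝ)) else 0)

/-- `𝒱 = Σ_i (v_i^{in} + v_i^{out})`. -/
def mcV (n : ℕ) (s : ℝ) (ν : ℕ) (z : Fin ν → Euc n) (lam : Fin ν → ℝ) (x : Euc n) : ℝ :=
  ∑ i, (vin n s (scrR n ν z lam) (z i) (lam i) x + vout n s (scrR n ν z lam) (z i) (lam i) x)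

/-- `𝒲 = Σ_i (w_i^{in} + w_i^{out})`. -/
def mcW (n : ℕ) (s : ℝ) (ν : ℕ) (z : Fin ν → Euc n) (lam : Fin ν → ℝ) (x : Euc n) : ℝ :=
  ∑ i, (win n s (scrR n ν z lam) (z i) (lam i) x + wout n s (scrR n ν z lam) (z i) (lam i) x)

/-- Weighted `L∞` norm `sup_x |f(x)|/W(x)`, valued in `ℝ≥0∞`. -/
def wnorm (n : ℕ) (f W : Euc n → ℝ) : ℝ≥0∞ :=
  ⨆ x : Euc n, ENNReal.ofReal (|f x| / W x)

/-- `σ = Σ_i U[z_i, λ_i]`. -/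
def sigmaB (n : ℕ) (s : ℝ) (ν : ℕ) (z : Fin ν → Euc n) (lam : Fin ν → ℝ) (x : Euc n) : ℝ :=
  ∑ i, bubble n s (z i) (lam i) x

/-- `Σ_{i,a} c_i^a U_i^{p-1} Z_i^a`. -/
def interTerm (n : ℕ) (s : ℝ) (ν : ℕ) (z : Fin ν → Euc n) (lam : Fin ν → ℝ)
    (c : Fin ν → Fin (n+1) → ℝ) (x : Euc n) : ℝ :=
  ∑ i, ∑ a, c i a * (bubble n s (z i) (lam i) x) ^ (pexp n s - 1) * bubbleZ n s (z i) (lam i) a x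

/-- Orthogonality conditions `∫ f U_i^{p-1} Z_i^a = 0` for all `i, a`. -/
def orthZ (n : ℕ) (s : ℝ) (ν : ℕ) (z : Fin ν → Euc n) (lam : Fin ν → ℝ) (f : Euc n → ℝ) : Prop :=
  ∀ (i : Fin ν) (a : Fin (n+1)),
    ∫ x : Euc n, f x * (bubble n s (z i) (lam i) x) ^ (pexp n s - 1) *
      bubbleZ n s (z i) (lam i) a x = 0

/-- `Γ(u) = ‖(-Δ)^s u - |u|^{p-1}u‖_{Ḣ^{-s}}`, computed on the Fourier side. -/
def gammaU (n : ℕ) (s : ℝ) (u : Euc n → ℝ) : ℝ :=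
  Real.sqrt (∫ ξ : Euc n, ‖ξ‖ ^ (-(2*s)) *
    ‖((‖ξ‖ ^ (2*s) : ℝ) : ℂ) * ft n u ξ -
      ft n (fun x => |u x| ^ (pexp n s - 1) * u x) ξ‖ ^ 2)

/-- The Riesz potential `Φ_{n,s}(x) = γ_{n,s}|x|^{2s-n}`. -/
def rieszK (n : ℕ) (s : ℝ) (x : Euc n) : ℝ :=
  (Real.Gamma (((n:ℝ) - 2*s)/2) / (Real.pi ^ ((n:ℝ)/2) * 2 ^ (2*s) * Real.Gamma s)) *
    ‖x‖ ^ (2*s - (n:ℝ))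


/-! ### Auxiliary lemmas for `stmt3` -/

private lemma st3_nn {x : ℝ} (hx : 0 ≤ x) (c : ℝ) : 0 ≤ x ^ c := Real.rpow_nonneg hx c

private lemma st3_logA {u v w : ℝ} (hu : 0 < u) (hv : 0 < v) (hw : 0 < w)
    (h : u * v^2 ≤ w^2) : Real.log u + 2*Real.log v ≤ 2*Real.log w := by
  have h1 := Real.log_le_log (by positivity) h
  rw [Real.log_mul hu.ne' (pow_ne_zero 2 hv.ne'), Real.log_pow, Real.log_pow] at h1
  push_cast at h1; linarith

private lemma st3_logB {u v w : ℝ} (hu : 0 < u) (hv : 0 < v) (hw : 0 < w)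
    (h : v^2 ≤ u * w^2) : 2*Real.log v ≤ Real.log u + 2*Real.log w := by
  have h1 := Real.log_le_log (by positivity) h
  rw [Real.log_mul hu.ne' (pow_ne_zero 2 hw.ne'), Real.log_pow, Real.log_pow] at h1
  push_cast at h1; linarith

/-- Core estimate, case `n ≠ 6s` (only `n ≥ 6s` is used). -/
private lemma st3_coreA (s e μ R a b A B : ℝ) (hs : 0 < s) (he : 2*s ≤ e) (hμ : 0 < μ)
    (ha : 0 ≤ a) (hb : 0 ≤ b) (hR : 1 ≤ R)
    (hA1 : 1 ≤ A) (hB1 : 1 ≤ B) (hA2 : A^2 = 1 + a^2) (hB2 : B^2 = 1 + b^2)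
    (hstar : μ * A^2 ≤ B^2) (hdich : R^2 ≤ μ * A^2 ∨ μ * R^2 ≤ B^2) :
    A ^ (-(4*s)) * μ ^ e * B ^ (-(2*e)) ≤
      (if a < R then R ^ (-(2*e)) * A ^ (-(4*s)) else R ^ (-(4*s)) * a ^ (-(2*e))) +
      μ ^ (2*s+e) * (if b < R then R ^ (-(2*e)) * B ^ (-(4*s)) else R ^ (-(4*s)) * b ^ (-(2*e))) := by
  have he0 : 0 < e := lt_of_lt_of_le (by linarith) he
  have hR0 : 0 < R := lt_of_lt_of_le one_pos hR
  have hA0 : 0 < A := lt_of_lt_of_le one_pos hA1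
  have hB0 : 0 < B := lt_of_lt_of_le one_pos hB1
  have lA0 : 0 ≤ Real.log A := Real.log_nonneg hA1
  have lB0 : 0 ≤ Real.log B := Real.log_nonneg hB1
  have lR0 : 0 ≤ Real.log R := Real.log_nonneg hR
  have lstar : Real.log μ + 2*Real.log A ≤ 2*Real.log B := st3_logA hμ hA0 hB0 hstar
  have hnn2 : 0 ≤ μ ^ (2*s+e) *
      (if b < R then R ^ (-(2*e)) * B ^ (-(4*s)) else R ^ (-(4*s)) * b ^ (-(2*e))) := by
    refine mul_nonneg (st3_nn hμ.le _) ?_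
    split_ifs
    · exact mul_nonneg (st3_nn hR0.le _) (st3_nn hB0.le _)
    · exact mul_nonneg (st3_nn hR0.le _) (st3_nn hb _)
  by_cases haR : a < R
  · rw [if_pos haR]
    by_cases hbig : μ * R^2 ≤ B^2
    · refine le_add_of_le_of_nonneg ?_ hnn2
      have l2 : Real.log μ + 2*Real.log R ≤ 2*Real.log B := st3_logA hμ hR0 hB0 hbig
      simp only [Real.rpow_def_of_pos hA0, Real.rpow_def_of_pos hμ, Real.rpow_def_of_pos hB0,
        Real.rpow_def_of_pos hR0, ← Real.exp_add]
      rw [Real.exp_le_exp]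
      linarith [mul_le_mul_of_nonneg_left l2 he0.le]
    · have h1 : R^2 ≤ μ * A^2 := hdich.resolve_right hbig
      have l1 : 2*Real.log R ≤ Real.log μ + 2*Real.log A := st3_logB hμ hR0 hA0 h1
      have hnn1 : 0 ≤ R ^ (-(2*e)) * A ^ (-(4*s)) :=
        mul_nonneg (st3_nn hR0.le _) (st3_nn hA0.le _)
      refine le_add_of_nonneg_of_le hnn1 ?_
      by_cases hbR : b < R
      · rw [if_pos hbR]
        simp only [Real.rpow_def_of_pos hA0, Real.rpow_def_of_pos hμ, Real.rpow_def_of_pos hB0,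
          Real.rpow_def_of_pos hR0, ← Real.exp_add]
        rw [Real.exp_le_exp]
        linarith [mul_le_mul_of_nonneg_left l1 he0.le,
          mul_le_mul_of_nonneg_left lstar (by linarith : (0:ℝ) ≤ e - 2*s),
          mul_le_mul_of_nonneg_left l1 hs.le]
      · rw [if_neg hbR]
        have hRb : R ≤ b := not_lt.1 hbR
        have hb0 : 0 < b := lt_of_lt_of_le hR0 hRb
        have lbB : Real.log b ≤ Real.log B := Real.log_le_log hb0 (by nlinarith)
        simp only [Real.rpow_def_of_pos hA0, Real.rpow_def_of_pos hμ, Real.rpow_def_of_pos hB0,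
          Real.rpow_def_of_pos hR0, Real.rpow_def_of_pos hb0, ← Real.exp_add]
        rw [Real.exp_le_exp]
        linarith [mul_le_mul_of_nonneg_left l1 hs.le,
          mul_le_mul_of_nonneg_left lbB he0.le]
  · rw [if_neg haR]
    refine le_add_of_le_of_nonneg ?_ hnn2
    have hRa : R ≤ a := not_lt.1 haR
    have ha0 : 0 < a := lt_of_lt_of_le hR0 hRa
    have lRa : Real.log R ≤ Real.log a := Real.log_le_log hR0 hRa
    have laA : Real.log a ≤ Real.log A := Real.log_le_log ha0 (by nlinarith)
    simp only [Real.rpow_def_of_pos hA0, Real.rpow_def_of_pos hμ, Real.rpow_def_of_pos hB0,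
      Real.rpow_def_of_pos hR0, Real.rpow_def_of_pos ha0, ← Real.exp_add]
    rw [Real.exp_le_exp]
    linarith [mul_le_mul_of_nonneg_left lstar he0.le,
      mul_le_mul_of_nonneg_left lRa hs.le, mul_le_mul_of_nonneg_left laA hs.le,
      mul_le_mul_of_nonneg_left laA he0.le, mul_le_mul_of_nonneg_left lRa he0.le]

/-- Core estimate, case `n = 6s`. -/
private lemma st3_coreB (s μ R a b A B : ℝ) (hs : 0 < s) (hμ : 0 < μ)
    (ha : 0 ≤ a) (hb : 0 ≤ b) (hR : 1 ≤ R)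
    (hA1 : 1 ≤ A) (hB1 : 1 ≤ B) (hA2 : A^2 = 1 + a^2) (hB2 : B^2 = 1 + b^2)
    (hstar : μ * A^2 ≤ B^2) (hdich : R^2 ≤ μ * A^2 ∨ μ * R^2 ≤ B^2) :
    A ^ (-(4*s)) * μ ^ (2*s) * B ^ (-(4*s)) ≤
      (if a < R^2 then R ^ (-(4*s)) * A ^ (-(4*s)) else R ^ (-(2*s)) * a ^ (-(5*s))) +
      μ ^ (4*s) * (if b < R^2 then R ^ (-(4*s)) * B ^ (-(4*s)) else R ^ (-(2*s)) * b ^ (-(5*s))) := by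
  have hR0 : 0 < R := lt_of_lt_of_le one_pos hR
  have hA0 : 0 < A := lt_of_lt_of_le one_pos hA1
  have hB0 : 0 < B := lt_of_lt_of_le one_pos hB1
  have lA0 : 0 ≤ Real.log A := Real.log_nonneg hA1
  have lB0 : 0 ≤ Real.log B := Real.log_nonneg hB1
  have lR0 : 0 ≤ Real.log R := Real.log_nonneg hR
  have lstar : Real.log μ + 2*Real.log A ≤ 2*Real.log B := st3_logA hμ hA0 hB0 hstar
  have hnn2 : 0 ≤ μ ^ (4*s) *
      (if b < R^2 then R ^ (-(4*s)) * B ^ (-(4*s)) else R ^ (-(2*s)) * b ^ (-(5*s))) := by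
    refine mul_nonneg (st3_nn hμ.le _) ?_
    split_ifs
    · exact mul_nonneg (st3_nn hR0.le _) (st3_nn hB0.le _)
    · exact mul_nonneg (st3_nn hR0.le _) (st3_nn hb _)
  by_cases haR : a < R^2
  · rw [if_pos haR]
    by_cases hbig : μ * R^2 ≤ B^2
    · refine le_add_of_le_of_nonneg ?_ hnn2
      have l2 : Real.log μ + 2*Real.log R ≤ 2*Real.log B := st3_logA hμ hR0 hB0 hbig
      simp only [Real.rpow_def_of_pos hA0, Real.rpow_def_of_pos hμ, Real.rpow_def_of_pos hB0,
        Real.rpow_def_of_pos hR0, ← Real.exp_add]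
      rw [Real.exp_le_exp]
      linarith [mul_le_mul_of_nonneg_left l2 hs.le]
    · have h1 : R^2 ≤ μ * A^2 := hdich.resolve_right hbig
      have l1 : 2*Real.log R ≤ Real.log μ + 2*Real.log A := st3_logB hμ hR0 hA0 h1
      have hnn1 : 0 ≤ R ^ (-(4*s)) * A ^ (-(4*s)) :=
        mul_nonneg (st3_nn hR0.le _) (st3_nn hA0.le _)
      refine le_add_of_nonneg_of_le hnn1 ?_
      by_cases hbR : b < R^2
      · rw [if_pos hbR]
        simp only [Real.rpow_def_of_pos hA0, Real.rpow_def_of_pos hμ, Real.rpow_def_of_pos hB0,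
          Real.rpow_def_of_pos hR0, ← Real.exp_add]
        rw [Real.exp_le_exp]
        linarith [mul_le_mul_of_nonneg_left l1 hs.le]
      · rw [if_neg hbR]
        have hRb : R^2 ≤ b := not_lt.1 hbR
        have hb0 : 0 < b := lt_of_lt_of_le (by positivity) hRb
        have lbB : Real.log b ≤ Real.log B := Real.log_le_log hb0 (by nlinarith)
        have hBsmall : B^2 ≤ μ * R^2 := le_of_lt (not_le.1 hbig)
        have l3 : 2*Real.log B ≤ Real.log μ + 2*Real.log R := st3_logB hμ hB0 hR0 hBsmall
        simp only [Real.rpow_def_of_pos hA0, Real.rpow_def_of_pos hμ, Real.rpow_def_of_pos hB0,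
          Real.rpow_def_of_pos hR0, Real.rpow_def_of_pos hb0, ← Real.exp_add]
        rw [Real.exp_le_exp]
        linarith [mul_le_mul_of_nonneg_left l1 hs.le,
          mul_le_mul_of_nonneg_left l3 hs.le, mul_le_mul_of_nonneg_left lbB hs.le,
          mul_nonneg hs.le lA0, mul_nonneg hs.le lB0, mul_nonneg hs.le lR0]
  · rw [if_neg haR]
    refine le_add_of_le_of_nonneg ?_ hnn2
    have hRa : R^2 ≤ a := not_lt.1 haR
    have ha0 : 0 < a := lt_of_lt_of_le (by positivity) hRa
    have lRa : 2*Real.log R ≤ Real.log a := by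
      have h1 := Real.log_le_log (by positivity) hRa
      rw [Real.log_pow] at h1; push_cast at h1; linarith
    have laA : Real.log a ≤ Real.log A := Real.log_le_log ha0 (by nlinarith)
    simp only [Real.rpow_def_of_pos hA0, Real.rpow_def_of_pos hμ, Real.rpow_def_of_pos hB0,
      Real.rpow_def_of_pos hR0, Real.rpow_def_of_pos ha0, ← Real.exp_add]
    rw [Real.exp_le_exp]
    linarith [mul_le_mul_of_nonneg_left lstar hs.le,
      mul_le_mul_of_nonneg_left lRa hs.le, mul_le_mul_of_nonneg_left laA hs.le,
      mul_nonneg hs.le lA0, mul_nonneg hs.le lB0, mul_nonneg hs.le lR0]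

private lemma st3_alpha_pos (n : ℕ) (s : ℝ) (hs : 0 < s) (h6 : 6*s ≤ (n:ℝ)) :
    0 < bubbleConst n s := by
  have hg1 : 0 < Real.Gamma (((n:ℝ)+2*s)/2) := Real.Gamma_pos_of_pos (by linarith)
  have hg2 : 0 < Real.Gamma (((n:ℝ)-2*s)/2) := Real.Gamma_pos_of_pos (by linarith)
  exact mul_pos (Real.rpow_pos_of_pos two_pos _)
    (Real.rpow_pos_of_pos (div_pos hg1 hg2) _)

private lemma st3_bubble_pos (n : ℕ) (s : ℝ) (hs : 0 < s) (h6 : 6*s ≤ (n:ℝ))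
    (z : Euc n) (lam : ℝ) (hl : 0 < lam) (x : Euc n) : 0 < bubble n s z lam x := by
  have h1 : (0:ℝ) < lam / (1 + lam ^ 2 * ‖x - z‖ ^ 2) := div_pos hl (by positivity)
  exact mul_pos (st3_alpha_pos n s hs h6) (Real.rpow_pos_of_pos h1 _)

private lemma st3_jb_sq (t : ℝ) : jb t ^ 2 = 1 + t^2 := by
  simp only [jb]; exact Real.sq_sqrt (by positivity)

private lemma st3_jb_one (t : ℝ) : 1 ≤ jb t := by
  have h1 := st3_jb_sq t
  have h0 : 0 ≤ jb t := by simp only [jb]; exact Real.sqrt_nonneg _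
  nlinarith [sq_nonneg t]

private lemma st3_bern (p A B : ℝ) (hp : 1 ≤ p) (hB : 0 ≤ B) (hBA : B ≤ A) :
    A ^ p - B ^ p ≤ p * A ^ (p-1) * (A - B) := by
  rcases eq_or_lt_of_le (hB.trans hBA) with hA0 | hA0
  · have hA : A = 0 := hA0.symm
    have hB0 : B = 0 := le_antisymm (hA ▸ hBA) hB
    have hp0 : p ≠ 0 := by linarith
    simp [hA, hB0, Real.zero_rpow hp0]
  · have h1 : -1 ≤ B/A - 1 := by
      have : 0 ≤ B/A := div_nonneg hB hA0.le
      linarith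
    have h2 := one_add_mul_self_le_rpow_one_add h1 hp
    have h3 : (1 + (B/A - 1)) = B/A := by ring
    rw [h3] at h2
    have h4 : (B/A)^p = B^p/A^p := Real.div_rpow hB hA0.le p
    have h5 : (0:ℝ) < A^p := Real.rpow_pos_of_pos hA0 p
    have h6 : A ^ (p-1+1) = A^(p-1) * A := Real.rpow_add_one hA0.ne' _
    rw [show p-1+1 = p from by ring] at h6
    have h7 := mul_le_mul_of_nonneg_right h2 h5.le
    rw [h4, div_mul_cancel₀ _ h5.ne'] at h7
    have h8 : B/A*A^p = B*A^(p-1) := by rw [h6]; field_simp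
    have h9 : (1 + p*(B/A-1)) * A^p = A^p + p*(B*A^(p-1)) - p*A^p := by
      rw [← h8]; ring
    rw [h9] at h7
    have h10 : p*A^(p-1)*(A-B) = p*A^p - p*(B*A^(p-1)) := by rw [h6]; ring
    rw [h10]; linarith

private lemma st3_v_nonneg (n : ℕ) (s R : ℝ) (z : Euc n) (lam : ℝ)
    (hl : 0 ≤ lam) (hR : 0 ≤ R) (x : Euc n) :
    0 ≤ vin n s R z lam x ∧ 0 ≤ vout n s R z lam x := by
  have hjb : 0 ≤ jb (lam * ‖x - z‖) := le_trans zero_le_one (st3_jb_one _)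
  constructor
  · simp only [vin]
    split_ifs <;> try rfl
    · exact mul_nonneg (mul_nonneg (st3_nn hl _) (st3_nn hR _)) (st3_nn hjb _)
    · exact mul_nonneg (mul_nonneg (st3_nn hl _) (st3_nn hR _)) (st3_nn hjb _)
  · simp only [vout]
    split_ifs <;> try rfl
    · exact mul_nonneg (mul_nonneg (st3_nn hl _) (st3_nn hR _)) (st3_nn (by positivity) _)
    · exact mul_nonneg (mul_nonneg (st3_nn hl _) (st3_nn hR _)) (st3_nn (by positivity) _)

private lemma st3_dich (li lj R a b d1 d2 D A B : ℝ)
    (hli : 0 < li) (hlj : 0 < lj) (hR : 0 < R)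
    (ha_def : li * d1 = a) (hb_def : lj * d2 = b)
    (hA2 : A^2 = 1 + a^2) (hB2 : B^2 = 1 + b^2)
    (hD : D ≤ d1 + d2)
    (hRij : 2*R ≤ max (max (Real.sqrt (li/lj)) (Real.sqrt (lj/li))) (Real.sqrt (li*lj) * D)) :
    R^2 ≤ (lj/li) * A^2 ∨ (lj/li) * R^2 ≤ B^2 := by
  rcases le_max_iff.1 hRij with h12 | h3
  · rcases le_max_iff.1 h12 with h1 | h2
    · right
      have h4 : (2*R)^2 ≤ li/lj := by
        have h5 := pow_le_pow_left₀ (by positivity) h1 2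
        rwa [Real.sq_sqrt (by positivity)] at h5
      have h6 : 4*R^2*lj ≤ li := by
        rw [le_div_iff₀ hlj] at h4; nlinarith
      have h7 : (lj/li) * R^2 ≤ 1/4 := by
        rw [div_mul_eq_mul_div, div_le_div_iff₀ hli (by norm_num)]
        nlinarith
      nlinarith [sq_nonneg b]
    · left
      have h4 : (2*R)^2 ≤ lj/li := by
        have h5 := pow_le_pow_left₀ (by positivity) h2 2
        rwa [Real.sq_sqrt (by positivity)] at h5
      nlinarith [sq_nonneg a, sq_nonneg R, div_nonneg hlj.le hli.le]
  · have e1 : Real.sqrt (li*lj) * d1 = Real.sqrt (lj/li) * a := by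
      rw [← ha_def, ← mul_assoc]
      congr 1
      rw [show li*lj = (lj/li) * li^2 from by field_simp,
        Real.sqrt_mul (by positivity), Real.sqrt_sq hli.le]
    have e2 : Real.sqrt (li*lj) * d2 = Real.sqrt (li/lj) * b := by
      rw [← hb_def, ← mul_assoc]
      congr 1
      rw [show li*lj = (li/lj) * lj^2 from by field_simp,
        Real.sqrt_mul (by positivity), Real.sqrt_sq hlj.le]
    have hsum : 2*R ≤ Real.sqrt (lj/li) * a + Real.sqrt (li/lj) * b := by
      have h5 := mul_le_mul_of_nonneg_left hD (Real.sqrt_nonneg (li*lj))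
      rw [mul_add, e1, e2] at h5
      linarith
    by_cases hca : R ≤ Real.sqrt (lj/li) * a
    · left
      have h4 : R^2 ≤ (lj/li) * a^2 := by
        have h5 := pow_le_pow_left₀ (by positivity) hca 2
        rwa [mul_pow, Real.sq_sqrt (by positivity)] at h5
      nlinarith [div_nonneg hlj.le hli.le]
    · right
      push_neg at hca
      have h5 : R ≤ Real.sqrt (li/lj) * b := by linarith
      have h4 : R^2 ≤ (li/lj) * b^2 := by
        have h6 := pow_le_pow_left₀ (by positivity) h5 2
        rwa [mul_pow, Real.sq_sqrt (by positivity)] at h6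
      have h7 : (lj/li)*((li/lj)*b^2) = b^2 := by field_simp
      nlinarith [mul_le_mul_of_nonneg_left h4 (le_of_lt (div_pos hlj hli)), sq_nonneg b]

/-- The key per-pair estimate. -/
private lemma st3_pair (n : ℕ) (s : ℝ) (hs : 0 < s) (h6 : 6*s ≤ (n:ℝ))
    (R : ℝ) (hR : 1 ≤ R) (zi zj : Euc n) (li lj : ℝ) (hli : 0 < li) (hlj : 0 < lj)
    (hRij : 2*R ≤ interR zi zj li lj) (x : Euc n)
    (hmax : bubble n s zj lj x ≤ bubble n s zi li x) :
    bubble n s zi li x ^ (pexp n s - 1) * bubble n s zj lj x ≤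
      bubbleConst n s ^ pexp n s *
        (vin n s R zi li x + vout n s R zi li x + (vin n s R zj lj x + vout n s R zj lj x)) := by
  have hns : (0:ℝ) < (n:ℝ) - 2*s := by linarith
  have halpos : 0 < bubbleConst n s := st3_alpha_pos n s hs h6
  obtain ⟨a, ha_def⟩ : ∃ a, li * ‖x - zi‖ = a := ⟨_, rfl⟩
  obtain ⟨b, hb_def⟩ : ∃ b, lj * ‖x - zj‖ = b := ⟨_, rfl⟩
  obtain ⟨A, hA_def⟩ : ∃ A, jb a = A := ⟨_, rfl⟩
  obtain ⟨B, hB_def⟩ : ∃ B, jb b = B := ⟨_, rfl⟩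
  obtain ⟨e, he_def⟩ : ∃ e, ((n:ℝ) - 2*s)/2 = e := ⟨_, rfl⟩
  obtain ⟨μ, hμ_def⟩ : ∃ μ, lj / li = μ := ⟨_, rfl⟩
  obtain ⟨p, hp_def⟩ : ∃ p, pexp n s = p := ⟨_, rfl⟩
  obtain ⟨α, hal_def⟩ : ∃ α, bubbleConst n s = α := ⟨_, rfl⟩
  have hα : 0 < α := hal_def ▸ halpos
  rw [hp_def, hal_def]
  have he0 : 0 < e := by rw [← he_def]; linarith
  have he2s : 2*s ≤ e := by rw [← he_def]; linarith
  have hp1 : 1 < p := by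
    rw [← hp_def, pexp, lt_div_iff₀ hns]; linarith
  have ha : 0 ≤ a := by rw [← ha_def]; positivity
  have hb : 0 ≤ b := by rw [← hb_def]; positivity
  have hA2 : A^2 = 1 + a^2 := by rw [← hA_def]; exact st3_jb_sq a
  have hB2 : B^2 = 1 + b^2 := by rw [← hB_def]; exact st3_jb_sq b
  have hA1 : 1 ≤ A := by rw [← hA_def]; exact st3_jb_one a
  have hB1 : 1 ≤ B := by rw [← hB_def]; exact st3_jb_one b
  have hA0 : 0 < A := lt_of_lt_of_le one_pos hA1
  have hB0 : 0 < B := lt_of_lt_of_le one_pos hB1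
  have hμ0 : 0 < μ := by rw [← hμ_def]; positivity
  have hXi0 : (0:ℝ) < li / A^2 := div_pos hli (by positivity)
  have hXj0 : (0:ℝ) < lj / B^2 := div_pos hlj (by positivity)
  have hUi : bubble n s zi li x = α * (li / A^2) ^ e := by
    have h1 : 1 + li ^ 2 * ‖x - zi‖ ^ 2 = A^2 := by rw [hA2, ← ha_def]; ring
    simp only [bubble, h1, hal_def, he_def]
  have hUj : bubble n s zj lj x = α * (lj / B^2) ^ e := by
    have h1 : 1 + lj ^ 2 * ‖x - zj‖ ^ 2 = B^2 := by rw [hB2, ← hb_def]; ring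
    simp only [bubble, h1, hal_def, he_def]
  -- (★)
  have hstar : μ * A^2 ≤ B^2 := by
    have h1 : lj / B^2 ≤ li / A^2 := by
      by_contra hcon
      push_neg at hcon
      have h2 := Real.rpow_lt_rpow hXi0.le hcon he0
      have h3 := mul_lt_mul_of_pos_left h2 hα
      rw [← hUi, ← hUj] at h3
      exact absurd hmax (not_le.2 h3)
    rw [div_le_div_iff₀ (by positivity) (by positivity)] at h1
    rw [← hμ_def, div_mul_eq_mul_div, div_le_iff₀ hli]
    linarith
  -- dichotomy from the geometry
  have hdich : R^2 ≤ μ * A^2 ∨ μ * R^2 ≤ B^2 := by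
    have hD : ‖zi - zj‖ ≤ ‖x - zi‖ + ‖x - zj‖ := by
      have h5 : zi - zj = (zi - x) + (x - zj) := by abel
      rw [h5]
      refine (norm_add_le _ _).trans ?_
      rw [norm_sub_rev zi x]
    have h := st3_dich li lj R a b ‖x - zi‖ ‖x - zj‖ ‖zi - zj‖ A B hli hlj
      (lt_of_lt_of_le one_pos hR) ha_def hb_def hA2 hB2 hD (by simpa [interR] using hRij)
    rwa [hμ_def] at h
  -- the left-hand side in normalized form
  have hep : e*(p-1) = 2*s := by
    rw [← he_def, ← hp_def, pexp]
    field_simp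
    ring
  have hαp : α^(p-1)*α = α^p := by
    rw [← Real.rpow_add_one hα.ne' (p-1), show p-1+1 = p from by ring]
  have hLHS : bubble n s zi li x ^ (p - 1) * bubble n s zj lj x
      = (α^p * li^(2*s+e)) * (A^(-(4*s)) * μ^e * B^(-(2*e))) := by
    rw [hUi, hUj]
    rw [Real.mul_rpow hα.le (Real.rpow_nonneg hXi0.le e), ← Real.rpow_mul hXi0.le, hep]
    have key : (li/A^2)^(2*s) * (lj/B^2)^e = li^(2*s+e) * (A^(-(4*s)) * μ^e * B^(-(2*e))) := by
      rw [Real.rpow_def_of_pos hXi0, Real.rpow_def_of_pos hXj0, Real.rpow_def_of_pos hli,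
        Real.rpow_def_of_pos hA0, Real.rpow_def_of_pos hμ0, Real.rpow_def_of_pos hB0]
      rw [← Real.exp_add, ← Real.exp_add, ← Real.exp_add, ← Real.exp_add]
      congr 1
      rw [Real.log_div hli.ne' (pow_ne_zero 2 hA0.ne'),
        Real.log_div hlj.ne' (pow_ne_zero 2 hB0.ne'), ← hμ_def,
        Real.log_div hlj.ne' hli.ne', Real.log_pow, Real.log_pow]
      push_cast
      ring
    calc α^(p-1) * (li/A^2)^(2*s) * (α * (lj/B^2)^e)
        = (α^(p-1)*α) * ((li/A^2)^(2*s) * (lj/B^2)^e) := by ring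
      _ = α^p * ((li/A^2)^(2*s) * (lj/B^2)^e) := by rw [hαp]
      _ = (α^p * li^(2*s+e)) * (A^(-(4*s)) * μ^e * B^(-(2*e))) := by rw [key]; ring
  have hlj4 : ∀ c : ℝ, lj^c = li^c * μ^c := by
    intro c
    rw [← hμ_def, ← Real.mul_rpow hli.le (by positivity)]
    congr 1
    field_simp
  have hfac : (0:ℝ) ≤ α^p * li^(2*s+e) :=
    mul_nonneg (st3_nn hα.le _) (st3_nn hli.le _)
  by_cases hn6 : (n:ℝ) = 6*s
  · -- case n = 6s
    have he6 : e = 2*s := by rw [← he_def, hn6]; ring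
    have hvi : vin n s R zi li x + vout n s R zi li x
        = li^(2*s+e) * (if a < R^2 then R ^ (-(4*s)) * A ^ (-(4*s))
            else R ^ (-(2*s)) * a ^ (-(5*s))) := by
      simp only [vin, vout, if_pos hn6, ha_def, hA_def]
      rw [show 2*s+e = 4*s from by rw [he6]; ring]
      by_cases hc : a < R^2
      · rw [if_pos hc, if_neg (not_le.2 hc), if_pos hc]; ring
      · rw [if_neg hc, if_pos (not_lt.1 hc), if_neg hc]; ring
    have hvj : vin n s R zj lj x + vout n s R zj lj x
        = li^(2*s+e) * (μ^(4*s) * (if b < R^2 then R ^ (-(4*s)) * B ^ (-(4*s))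
            else R ^ (-(2*s)) * b ^ (-(5*s)))) := by
      simp only [vin, vout, if_pos hn6, hb_def, hB_def]
      rw [show (4:ℝ)*s = 2*s+e from by rw [he6]; ring, hlj4 (2*s+e),
        show 2*s+e = 4*s from by rw [he6]; ring]
      by_cases hc : b < R^2
      · rw [if_pos hc, if_neg (not_le.2 hc), if_pos hc]; ring
      · rw [if_neg hc, if_pos (not_lt.1 hc), if_neg hc]; ring
    have hcore := st3_coreB s μ R a b A B hs hμ0 ha hb hR hA1 hB1 hA2 hB2 hstar hdich
    have hconv : A^(-(4*s)) * μ^e * B^(-(2*e)) = A^(-(4*s)) * μ^(2*s) * B^(-(4*s)) := by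
      rw [he6, show (-(2*(2*s))) = (-(4*s)) from by ring]
    rw [hLHS, hconv, hvi, hvj]
    calc (α^p * li^(2*s+e)) * (A^(-(4*s)) * μ^(2*s) * B^(-(4*s)))
        ≤ (α^p * li^(2*s+e)) *
          ((if a < R^2 then R ^ (-(4*s)) * A ^ (-(4*s)) else R ^ (-(2*s)) * a ^ (-(5*s))) +
           μ^(4*s) * (if b < R^2 then R ^ (-(4*s)) * B ^ (-(4*s))
             else R ^ (-(2*s)) * b ^ (-(5*s)))) := mul_le_mul_of_nonneg_left hcore hfac
      _ = α ^ p * (li^(2*s+e) * (if a < R^2 then R ^ (-(4*s)) * A ^ (-(4*s))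
            else R ^ (-(2*s)) * a ^ (-(5*s))) +
          li^(2*s+e) * (μ^(4*s) * (if b < R^2 then R ^ (-(4*s)) * B ^ (-(4*s))
            else R ^ (-(2*s)) * b ^ (-(5*s))))) := by ring
  · -- case n ≠ 6s
    have hex1 : ((n:ℝ)+2*s)/2 = 2*s+e := by rw [← he_def]; ring
    have hex2 : 2*s - (n:ℝ) = -(2*e) := by rw [← he_def]; ring
    have hvi : vin n s R zi li x + vout n s R zi li x
        = li^(2*s+e) * (if a < R then R ^ (-(2*e)) * A ^ (-(4*s))
            else R ^ (-(4*s)) * a ^ (-(2*e))) := by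
      simp only [vin, vout, if_neg hn6, ha_def, hA_def, hex1, hex2]
      by_cases hc : a < R
      · rw [if_pos hc, if_neg (not_le.2 hc), if_pos hc]; ring
      · rw [if_neg hc, if_pos (not_lt.1 hc), if_neg hc]; ring
    have hvj : vin n s R zj lj x + vout n s R zj lj x
        = li^(2*s+e) * (μ^(2*s+e) * (if b < R then R ^ (-(2*e)) * B ^ (-(4*s))
            else R ^ (-(4*s)) * b ^ (-(2*e)))) := by
      simp only [vin, vout, if_neg hn6, hb_def, hB_def, hex1, hex2]
      rw [hlj4 (2*s+e)]
      by_cases hc : b < R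
      · rw [if_pos hc, if_neg (not_le.2 hc), if_pos hc]; ring
      · rw [if_neg hc, if_pos (not_lt.1 hc), if_neg hc]; ring
    have hcore := st3_coreA s e μ R a b A B hs he2s hμ0 ha hb hR hA1 hB1 hA2 hB2 hstar hdich
    rw [hLHS, hvi, hvj]
    calc (α^p * li^(2*s+e)) * (A^(-(4*s)) * μ^e * B^(-(2*e)))
        ≤ (α^p * li^(2*s+e)) *
          ((if a < R then R ^ (-(2*e)) * A ^ (-(4*s)) else R ^ (-(4*s)) * a ^ (-(2*e))) +
           μ^(2*s+e) * (if b < R then R ^ (-(2*e)) * B ^ (-(4*s))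
             else R ^ (-(4*s)) * b ^ (-(2*e)))) := mul_le_mul_of_nonneg_left hcore hfac
      _ = α ^ p * (li^(2*s+e) * (if a < R then R ^ (-(2*e)) * A ^ (-(4*s))
            else R ^ (-(4*s)) * a ^ (-(2*e))) +
          li^(2*s+e) * (μ^(2*s+e) * (if b < R then R ^ (-(2*e)) * B ^ (-(4*s))
            else R ^ (-(4*s)) * b ^ (-(2*e))))) := by ring

private lemma st3_scrR (n ν : ℕ) (s : ℝ) (hs : 0 < s) (h6 : 6*s ≤ (n:ℝ)) (hν : 2 ≤ ν)
    (z : Fin ν → Euc n) (lam : Fin ν → ℝ) (hlam : ∀ i, 0 < lam i)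
    (hδ : deltaInteracting n s ν z lam ((12:ℝ) ^ (-(((n:ℝ) - 2*s)/2)))) :
    1 ≤ scrR n ν z lam ∧ ∀ i j : Fin ν, i ≠ j →
      2 * scrR n ν z lam ≤ interR (z i) (z j) (lam i) (lam j) := by
  have hi0 : (0:ℕ) < ν := by omega
  have hi1 : (1:ℕ) < ν := by omega
  have hne : {r : ℝ | ∃ i j : Fin ν, i ≠ j ∧ r = interR (z i) (z j) (lam i) (lam j)}.Nonempty := by
    refine ⟨interR (z ⟨0,hi0⟩) (z ⟨1,hi1⟩) (lam ⟨0,hi0⟩) (lam ⟨1,hi1⟩), ⟨0,hi0⟩, ⟨1,hi1⟩, ?_, rfl⟩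
    simp [Fin.ext_iff]
  have hlb2 : ∀ r ∈ {r : ℝ | ∃ i j : Fin ν, i ≠ j ∧ r = interR (z i) (z j) (lam i) (lam j)},
      (2:ℝ) ≤ r := by
    rintro r ⟨i, j, hij, rfl⟩
    have hq := hδ i j hij
    simp only [interq] at hq
    have he0 : (0:ℝ) < ((n:ℝ)-2*s)/2 := by linarith
    have hB2 : (2:ℝ) ≤ lam i/lam j + lam j/lam i + lam i*lam j*‖z i - z j‖^2 := by
      have h1 : (2:ℝ) ≤ lam i/lam j + lam j/lam i := by
        rw [div_add_div _ _ (hlam j).ne' (hlam i).ne', le_div_iff₀ (mul_pos (hlam j) (hlam i))]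
        nlinarith [sq_nonneg (lam i - lam j)]
      nlinarith [mul_nonneg (mul_nonneg (hlam i).le (hlam j).le) (sq_nonneg ‖z i - z j‖)]
    have hB12 : (12:ℝ) ≤ lam i/lam j + lam j/lam i + lam i*lam j*‖z i - z j‖^2 := by
      by_contra hc
      push_neg at hc
      have h2 : (12:ℝ)^(-(((n:ℝ)-2*s)/2)) <
          (lam i/lam j + lam j/lam i + lam i*lam j*‖z i - z j‖^2)^(-(((n:ℝ)-2*s)/2)) :=
        (Real.rpow_lt_rpow_iff_of_neg (by norm_num) (by linarith) (by linarith)).2 hc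
      linarith
    have htri : (4:ℝ) ≤ lam i/lam j ∨ (4:ℝ) ≤ lam j/lam i ∨
        (4:ℝ) ≤ lam i*lam j*‖z i - z j‖^2 := by
      by_contra hc
      push_neg at hc
      obtain ⟨h1, h2, h3⟩ := hc
      linarith
    have h24 : (2:ℝ) = Real.sqrt 4 := by
      rw [show (4:ℝ) = 2^2 from by norm_num, Real.sqrt_sq (by norm_num)]
    simp only [interR]
    rcases htri with h | h | h
    · have h1 : (2:ℝ) ≤ Real.sqrt (lam i/lam j) := by
        rw [h24]; exact Real.sqrt_le_sqrt h
      exact h1.trans ((le_max_left _ _).trans (le_max_left _ _))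
    · have h1 : (2:ℝ) ≤ Real.sqrt (lam j/lam i) := by
        rw [h24]; exact Real.sqrt_le_sqrt h
      exact h1.trans ((le_max_right _ _).trans (le_max_left _ _))
    · have h1 : (2:ℝ) ≤ Real.sqrt (lam i*lam j*‖z i - z j‖^2) := by
        rw [h24]; exact Real.sqrt_le_sqrt h
      rw [Real.sqrt_mul (mul_nonneg (hlam i).le (hlam j).le), Real.sqrt_sq (norm_nonneg _)] at h1
      exact h1.trans (le_max_right _ _)
  have hbdd : BddBelow {r : ℝ | ∃ i j : Fin ν, i ≠ j ∧ r = interR (z i) (z j) (lam i) (lam j)} :=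
    ⟨2, fun r hr => hlb2 r hr⟩
  constructor
  · have h1 : (2:ℝ) ≤ sInf {r : ℝ | ∃ i j : Fin ν, i ≠ j ∧
        r = interR (z i) (z j) (lam i) (lam j)} := le_csInf hne hlb2
    simp only [scrR]
    linarith
  · intro i j hij
    have hmem : interR (z i) (z j) (lam i) (lam j) ∈
        {r : ℝ | ∃ i j : Fin ν, i ≠ j ∧ r = interR (z i) (z j) (lam i) (lam j)} :=
      ⟨i, j, hij, rfl⟩
    have h1 := csInf_le hbdd hmem
    simp only [scrR]
    linarith

private lemma st3_v_pos (n : ℕ) (s R : ℝ) (z : Euc n) (lam : ℝ)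
    (hl : 0 < lam) (hR : 1 ≤ R) (x : Euc n) :
    0 < vin n s R z lam x + vout n s R z lam x := by
  have hR0 : 0 < R := lt_of_lt_of_le one_pos hR
  have hjb : 0 < jb (lam * ‖x - z‖) := lt_of_lt_of_le one_pos (st3_jb_one _)
  obtain ⟨hv1, hv2⟩ := st3_v_nonneg n s R z lam hl.le hR0.le x
  by_cases hn6 : (n:ℝ) = 6*s
  · by_cases hc : lam * ‖x - z‖ < R^2
    · have h1 : 0 < vin n s R z lam x := by
        simp only [vin, if_pos hn6, if_pos hc]
        exact mul_pos (mul_pos (Real.rpow_pos_of_pos hl _) (Real.rpow_pos_of_pos hR0 _))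
          (Real.rpow_pos_of_pos hjb _)
      linarith
    · have hble : 0 < lam * ‖x - z‖ := lt_of_lt_of_le (pow_pos hR0 2) (not_lt.1 hc)
      have h1 : 0 < vout n s R z lam x := by
        simp only [vout, if_pos hn6, if_pos (not_lt.1 hc)]
        exact mul_pos (mul_pos (Real.rpow_pos_of_pos hl _) (Real.rpow_pos_of_pos hR0 _))
          (Real.rpow_pos_of_pos hble _)
      linarith
  · by_cases hc : lam * ‖x - z‖ < R
    · have h1 : 0 < vin n s R z lam x := by
        simp only [vin, if_neg hn6, if_pos hc]
        exact mul_pos (mul_pos (Real.rpow_pos_of_pos hl _) (Real.rpow_pos_of_pos hR0 _))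
          (Real.rpow_pos_of_pos hjb _)
      linarith
    · have hble : 0 < lam * ‖x - z‖ := lt_of_lt_of_le hR0 (not_lt.1 hc)
      have h1 : 0 < vout n s R z lam x := by
        simp only [vout, if_neg hn6, if_pos (not_lt.1 hc)]
        exact mul_pos (mul_pos (Real.rpow_pos_of_pos hl _) (Real.rpow_pos_of_pos hR0 _))
          (Real.rpow_pos_of_pos hble _)
      linarith

/-- Lemma 3.2: bound on the `**`-norm of the error term, `n ≥ 6s`. -/
theorem stmt3 (n ν : ℕ) (s : ℝ) (hs : 0 < s) (hν : 2 ≤ ν) (h6 : 6*s ≤ (n:ℝ)) :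
    ∃ δ C : ℝ, 0 < δ ∧ 0 < C ∧
      ∀ (z : Fin ν → Euc n) (lam : Fin ν → ℝ), (∀ i, 0 < lam i) →
        deltaInteracting n s ν z lam δ →
        wnorm n
          (fun x => (sigmaB n s ν z lam x) ^ (pexp n s) -
            ∑ i, (bubble n s (z i) (lam i) x) ^ (pexp n s))
          (mcV n s ν z lam) ≤ ENNReal.ofReal C := by
  have hns : (0:ℝ) < (n:ℝ) - 2*s := by linarith
  have hα : 0 < bubbleConst n s := st3_alpha_pos n s hs h6
  have hp1 : 1 < pexp n s := by rw [pexp, lt_div_iff₀ hns]; linarith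
  have hν0 : (0:ℝ) < (ν:ℝ) := by
    have h1 : (0:ℕ) < ν := by omega
    exact_mod_cast h1
  have hK0 : (0:ℝ) ≤ pexp n s * (ν:ℝ)^(pexp n s - 1) :=
    mul_nonneg (by linarith) (st3_nn (by positivity) _)
  have hαp : 0 < bubbleConst n s ^ pexp n s := Real.rpow_pos_of_pos hα _
  refine ⟨(12:ℝ) ^ (-(((n:ℝ) - 2*s)/2)),
    2*(ν:ℝ)*(pexp n s * (ν:ℝ)^(pexp n s - 1) + 1) * bubbleConst n s ^ pexp n s,
    Real.rpow_pos_of_pos (by norm_num) _, ?_, ?_⟩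
  · exact mul_pos (mul_pos (mul_pos two_pos hν0) (by linarith)) hαp
  · intro z lam hlam hδ
    obtain ⟨hR1, hR2⟩ := st3_scrR n ν s hs h6 hν z lam hlam hδ
    have hi0ν : (0:ℕ) < ν := by omega
    simp only [wnorm]
    refine iSup_le fun x => ?_
    refine ENNReal.ofReal_le_ofReal ?_
    set V := mcV n s ν z lam x with hV_def
    have hvnn : ∀ k : Fin ν, 0 ≤ vin n s (scrR n ν z lam) (z k) (lam k) x
        + vout n s (scrR n ν z lam) (z k) (lam k) x := by
      intro k
      obtain ⟨h1, h2⟩ := st3_v_nonneg n s (scrR n ν z lam) (z k) (lam k)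
        (hlam k).le (by linarith) x
      linarith
    have hle : ∀ k : Fin ν, vin n s (scrR n ν z lam) (z k) (lam k) x
        + vout n s (scrR n ν z lam) (z k) (lam k) x ≤ V := by
      intro k
      rw [hV_def]
      simp only [mcV]
      exact Finset.single_le_sum (fun l _ => hvnn l) (Finset.mem_univ k)
    have hVpos : 0 < V :=
      lt_of_lt_of_le (st3_v_pos n s (scrR n ν z lam) (z ⟨0, hi0ν⟩) (lam ⟨0, hi0ν⟩)
        (hlam ⟨0, hi0ν⟩) hR1 x) (hle ⟨0, hi0ν⟩)
    obtain ⟨i, -, hi⟩ := Finset.exists_max_image Finset.univ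
      (fun k => bubble n s (z k) (lam k) x) ⟨⟨0, hi0ν⟩, Finset.mem_univ _⟩
    have hi' : ∀ k : Fin ν, bubble n s (z k) (lam k) x ≤ bubble n s (z i) (lam i) x :=
      fun k => hi k (Finset.mem_univ k)
    have hU : ∀ k, 0 < bubble n s (z k) (lam k) x :=
      fun k => st3_bubble_pos n s hs h6 _ _ (hlam k) x
    have hsig : sigmaB n s ν z lam x = ∑ k, bubble n s (z k) (lam k) x := rfl
    have hUi_le : bubble n s (z i) (lam i) x ≤ sigmaB n s ν z lam x := by
      rw [hsig]
      exact Finset.single_le_sum (fun k _ => (hU k).le) (Finset.mem_univ i)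
    have hσ0 : 0 ≤ sigmaB n s ν z lam x := (hU i).le.trans hUi_le
    have hσν : sigmaB n s ν z lam x ≤ (ν:ℝ) * bubble n s (z i) (lam i) x := by
      rw [hsig]
      have h1 : ∑ k, bubble n s (z k) (lam k) x
          ≤ ∑ _k : Fin ν, bubble n s (z i) (lam i) x :=
        Finset.sum_le_sum (fun k _ => hi' k)
      simpa [Finset.sum_const, Finset.card_univ, nsmul_eq_mul] using h1
    have hBern := st3_bern (pexp n s) _ _ hp1.le (hU i).le hUi_le
    have hrest : sigmaB n s ν z lam x - bubble n s (z i) (lam i) x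
        = ∑ j ∈ Finset.univ.erase i, bubble n s (z j) (lam j) x := by
      rw [hsig, ← Finset.sum_erase_add Finset.univ _ (Finset.mem_univ i)]
      ring
    have hp0 : (0:ℝ) ≤ pexp n s - 1 := by linarith
    have hT0 : 0 ≤ ∑ j ∈ Finset.univ.erase i, bubble n s (z j) (lam j) x :=
      Finset.sum_nonneg fun j _ => (hU j).le
    have hσp1 : sigmaB n s ν z lam x ^ (pexp n s - 1)
        ≤ (ν:ℝ)^(pexp n s - 1) * bubble n s (z i) (lam i) x ^ (pexp n s - 1) := by
      rw [← Real.mul_rpow hν0.le (hU i).le]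
      exact Real.rpow_le_rpow hσ0 hσν hp0
    have hpair : ∀ j ∈ Finset.univ.erase i,
        bubble n s (z i) (lam i) x ^ (pexp n s - 1) * bubble n s (z j) (lam j) x ≤
          bubbleConst n s ^ pexp n s * (2 * V) := by
      intro j hj
      have hij : j ≠ i := Finset.ne_of_mem_erase hj
      have h1 := st3_pair n s hs h6 (scrR n ν z lam) hR1 (z i) (z j) (lam i) (lam j)
        (hlam i) (hlam j) (hR2 i j (Ne.symm hij)) x (hi' j)
      refine h1.trans ?_
      refine mul_le_mul_of_nonneg_left ?_ (st3_nn hα.le _)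
      linarith [hle i, hle j, hvnn i, hvnn j]
    have hXY : |sigmaB n s ν z lam x ^ pexp n s
          - ∑ k, bubble n s (z k) (lam k) x ^ pexp n s|
        ≤ (sigmaB n s ν z lam x ^ pexp n s - bubble n s (z i) (lam i) x ^ pexp n s)
          + ∑ j ∈ Finset.univ.erase i, bubble n s (z j) (lam j) x ^ pexp n s := by
      have hsplit : ∑ k, bubble n s (z k) (lam k) x ^ pexp n s
          = ∑ j ∈ Finset.univ.erase i, bubble n s (z j) (lam j) x ^ pexp n s
            + bubble n s (z i) (lam i) x ^ pexp n s :=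
        (Finset.sum_erase_add _ _ (Finset.mem_univ i)).symm
      have hX0 : 0 ≤ sigmaB n s ν z lam x ^ pexp n s
          - bubble n s (z i) (lam i) x ^ pexp n s :=
        sub_nonneg.2 (Real.rpow_le_rpow (hU i).le hUi_le (by linarith))
      have hY0 : 0 ≤ ∑ j ∈ Finset.univ.erase i, bubble n s (z j) (lam j) x ^ pexp n s :=
        Finset.sum_nonneg fun j _ => st3_nn (hU j).le _
      rw [hsplit, abs_le]
      constructor <;> linarith
    have hstep1 : sigmaB n s ν z lam x ^ pexp n s - bubble n s (z i) (lam i) x ^ pexp n s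
        ≤ pexp n s * (ν:ℝ)^(pexp n s - 1) *
          ∑ j ∈ Finset.univ.erase i,
            bubble n s (z i) (lam i) x ^ (pexp n s - 1) * bubble n s (z j) (lam j) x := by
      have h2 : pexp n s * sigmaB n s ν z lam x ^ (pexp n s - 1)
            * (sigmaB n s ν z lam x - bubble n s (z i) (lam i) x)
          ≤ pexp n s * ((ν:ℝ)^(pexp n s - 1) * bubble n s (z i) (lam i) x ^ (pexp n s - 1))
            * (sigmaB n s ν z lam x - bubble n s (z i) (lam i) x) := by
        apply mul_le_mul_of_nonneg_right
          (mul_le_mul_of_nonneg_left hσp1 (by linarith)) (by rw [hrest]; exact hT0)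
      have h3 : pexp n s * ((ν:ℝ)^(pexp n s - 1) * bubble n s (z i) (lam i) x ^ (pexp n s - 1))
            * (sigmaB n s ν z lam x - bubble n s (z i) (lam i) x)
          = pexp n s * (ν:ℝ)^(pexp n s - 1) *
            ∑ j ∈ Finset.univ.erase i,
              bubble n s (z i) (lam i) x ^ (pexp n s - 1) * bubble n s (z j) (lam j) x := by
        rw [hrest, Finset.mul_sum, Finset.mul_sum]
        exact Finset.sum_congr rfl fun j _ => by ring
      linarith
    have hstep2 : ∑ j ∈ Finset.univ.erase i, bubble n s (z j) (lam j) x ^ pexp n s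
        ≤ ∑ j ∈ Finset.univ.erase i,
            bubble n s (z i) (lam i) x ^ (pexp n s - 1) * bubble n s (z j) (lam j) x := by
      refine Finset.sum_le_sum fun j hj => ?_
      have hee : pexp n s - 1 + 1 = pexp n s := by ring
      have h2 : bubble n s (z j) (lam j) x ^ pexp n s
          = bubble n s (z j) (lam j) x ^ (pexp n s - 1) * bubble n s (z j) (lam j) x := by
        rw [← Real.rpow_add_one (hU j).ne' (pexp n s - 1), hee]
      rw [h2]
      exact mul_le_mul_of_nonneg_right
        (Real.rpow_le_rpow (hU j).le (hi' j) hp0) (hU j).le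
    have hstep3 : ∑ j ∈ Finset.univ.erase i,
          bubble n s (z i) (lam i) x ^ (pexp n s - 1) * bubble n s (z j) (lam j) x
        ≤ (ν:ℝ) * (bubbleConst n s ^ pexp n s * (2 * V)) := by
      have h1 := Finset.sum_le_sum hpair
      have h2 : ∑ _j ∈ Finset.univ.erase i, bubbleConst n s ^ pexp n s * (2 * V)
          = ((Finset.univ.erase i).card : ℝ) * (bubbleConst n s ^ pexp n s * (2 * V)) := by
        rw [Finset.sum_const, nsmul_eq_mul]
      have h3 : ((Finset.univ.erase i).card : ℝ) ≤ (ν:ℝ) := by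
        have h4 : (Finset.univ.erase i).card ≤ ν :=
          le_trans (Finset.card_le_card (Finset.erase_subset _ _)) (by simp)
        exact_mod_cast h4
      have h5 : 0 ≤ bubbleConst n s ^ pexp n s * (2 * V) :=
        mul_nonneg (st3_nn hα.le _) (by linarith)
      calc ∑ j ∈ Finset.univ.erase i,
            bubble n s (z i) (lam i) x ^ (pexp n s - 1) * bubble n s (z j) (lam j) x
          ≤ ∑ _j ∈ Finset.univ.erase i, bubbleConst n s ^ pexp n s * (2 * V) := h1
        _ = ((Finset.univ.erase i).card : ℝ) * (bubbleConst n s ^ pexp n s * (2 * V)) := h2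
        _ ≤ (ν:ℝ) * (bubbleConst n s ^ pexp n s * (2 * V)) :=
            mul_le_mul_of_nonneg_right h3 h5
    rw [div_le_iff₀ hVpos]
    calc |sigmaB n s ν z lam x ^ pexp n s - ∑ k, bubble n s (z k) (lam k) x ^ pexp n s|
        ≤ (sigmaB n s ν z lam x ^ pexp n s - bubble n s (z i) (lam i) x ^ pexp n s)
          + ∑ j ∈ Finset.univ.erase i, bubble n s (z j) (lam j) x ^ pexp n s := hXY
      _ ≤ pexp n s * (ν:ℝ)^(pexp n s - 1) *
            (∑ j ∈ Finset.univ.erase i,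
              bubble n s (z i) (lam i) x ^ (pexp n s - 1) * bubble n s (z j) (lam j) x)
          + ∑ j ∈ Finset.univ.erase i,
              bubble n s (z i) (lam i) x ^ (pexp n s - 1) * bubble n s (z j) (lam j) x :=
            add_le_add hstep1 hstep2
      _ = (pexp n s * (ν:ℝ)^(pexp n s - 1) + 1) *
            ∑ j ∈ Finset.univ.erase i,
              bubble n s (z i) (lam i) x ^ (pexp n s - 1) * bubble n s (z j) (lam j) x := by
            ring
      _ ≤ (pexp n s * (ν:ℝ)^(pexp n s - 1) + 1) *
            ((ν:ℝ) * (bubbleConst n s ^ pexp n s * (2 * V))) :=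
            mul_le_mul_of_nonneg_left hstep3 (by linarith)
      _ = 2*(ν:ℝ)*(pexp n s * (ν:ℝ)^(pexp n s - 1) + 1) * bubbleConst n s ^ pexp n s * V := by
            ring

end
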